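/- For every triangle, the ratio of its perimeter to its inradius is at least 6√3, with equality if and only if the triangle is equilateral. -/

import Mathlib

lemma amgm3 (x y z : ℝ) (hx : 0 < x) (hy : 0 < y) (hz : 0 < z) :
    27 * (x * y * z) ≤ (x + y + z)^3 := by
  nlinarith [sq_nonneg (x - y), sq_nonneg (y - z), sq_nonneg (x - z),
    mul_pos hx hy, mul_pos hy hz, mul_pos hx hz]

lemma amgm3_strict (x y z : ℝ) (hx : 0 < x) (hy : 0 < y) (hz : 0 < z) (hxy : x ≠ y) :
    27 * (x * y * z) < (x + y + z)^3 := by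
  have h : 0 < (x - y)^2 := by have := sub_ne_zero.mpr hxy; positivity
  nlinarith [sq_nonneg (y - z), sq_nonneg (x - z), mul_pos hx hy, mul_pos hy hz, mul_pos hx hz]

/-- For every triangle (side lengths `a b c`, semiperimeter `s`, Heron area `A`, inradius
`r = A/s`), the ratio of perimeter to inradius is at least `6√3`, with equality iff the
triangle is equilateral. -/
theorem perimeter_div_inradius_ge (a b c : ℝ)
    (ha : 0 < a) (hb : 0 < b) (hc : 0 < c)
    (hab : a < b + c) (hbc : b < a + c) (hca : c < a + b)
    (s A r : ℝ) (hs : s = (a + b + c) / 2)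
    (hA : A = Real.sqrt (s * (s - a) * (s - b) * (s - c)))
    (hr : r = A / s) :
    6 * Real.sqrt 3 ≤ (a + b + c) / r ∧
      ((a + b + c) / r = 6 * Real.sqrt 3 ↔ a = b ∧ b = c) := by
  have hs0 : 0 < s := by rw [hs]; linarith
  have hx : 0 < s - a := by rw [hs]; linarith
  have hy : 0 < s - b := by rw [hs]; linarith
  have hz : 0 < s - c := by rw [hs]; linarith
  have hsum : (s - a) + (s - b) + (s - c) = s := by rw [hs]; ring
  have hP : 0 < s * (s - a) * (s - b) * (s - c) := by positivity
  have hA0 : 0 < A := by rw [hA]; exact Real.sqrt_pos.mpr hP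
  have hA2 : A ^ 2 = s * (s - a) * (s - b) * (s - c) := by
    rw [hA, sq, Real.mul_self_sqrt hP.le]
  have hr0 : 0 < r := by rw [hr]; positivity
  have hsum2 : a + b + c = 2 * s := by rw [hs]; ring
  have key : (a + b + c) / r = 2 * s ^ 2 / A := by
    rw [hr, hsum2]; field_simp
  have hsq3 : Real.sqrt 3 ^ 2 = 3 := Real.sq_sqrt (by norm_num)
  have hmain : 6 * Real.sqrt 3 ≤ (a + b + c) / r := by
    rw [key]
    have hpos : (0:ℝ) ≤ 2 * s ^ 2 / A := by positivity
    refine le_of_pow_le_pow_left₀ two_ne_zero hpos ?_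
    have h1 : (6 * Real.sqrt 3) ^ 2 = 108 := by rw [mul_pow, hsq3]; norm_num
    rw [h1, div_pow, le_div_iff₀ (by positivity : (0:ℝ) < A ^ 2), hA2]
    have hg := amgm3 (s - a) (s - b) (s - c) hx hy hz
    rw [hsum] at hg
    nlinarith [hs0, mul_pos (mul_pos hx hy) hz]
  refine ⟨hmain, ?_, fun ⟨h1, h2⟩ => ?_⟩
  · intro heq
    -- derive s^3 = 27 * (s-a)(s-b)(s-c)
    have hEA : 2 * s ^ 2 / A = 6 * Real.sqrt 3 := by rw [← key, heq]
    have hE : 2 * s ^ 2 = 6 * Real.sqrt 3 * A := by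
      field_simp at hEA; linarith
    have hE2 : 4 * s ^ 4 = 108 * A ^ 2 := by
      linear_combination (2 * s ^ 2 + 6 * Real.sqrt 3 * A) * hE + 36 * A ^ 2 * hsq3
    rw [hA2] at hE2
    have hcube : 27 * ((s - a) * (s - b) * (s - c)) * s = s ^ 3 * s := by
      linear_combination (-1/4) * hE2
    have hcube' : 27 * ((s - a) * (s - b) * (s - c)) = s ^ 3 :=
      mul_right_cancel₀ hs0.ne' hcube
    constructor
    · by_contra hne
      have hxy : s - a ≠ s - b := fun h => hne (by linarith)
      have hst := amgm3_strict (s - a) (s - b) (s - c) hx hy hz hxy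
      rw [hsum] at hst
      linarith
    · by_contra hne
      have hyz : s - b ≠ s - c := fun h => hne (by linarith)
      have hst := amgm3_strict (s - b) (s - c) (s - a) hy hz hx hyz
      have hsum' : (s - b) + (s - c) + (s - a) = s := by linarith
      rw [hsum'] at hst
      have : 27 * ((s - b) * (s - c) * (s - a)) = s ^ 3 := by linear_combination hcube'
      linarith
  · -- backward direction
    subst h1 h2
    have hAval : A = a ^ 2 / 4 * Real.sqrt 3 := by
      rw [hA, hs,
        show ((a + a + a) / 2 * ((a + a + a) / 2 - a) * ((a + a + a) / 2 - a) *
          ((a + a + a) / 2 - a)) = (a ^ 2 / 4) ^ 2 * 3 by ring,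
        Real.sqrt_mul (by positivity), Real.sqrt_sq (by positivity)]
    have hrt : (0:ℝ) < Real.sqrt 3 := Real.sqrt_pos.mpr (by norm_num)
    rw [key, hAval, hs]
    field_simp
    linear_combination (-12) * hsq3
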